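/- Let f : D → 𝓡, where 𝓡 carries a metric d, and let {R₀ˣ : x ∈ D} be an initial family with ∪_{x∈D} R₀ˣ = 𝓡, generating the basic set sequence with layer function L. Fix x₀, y₀ ∈ D, set r₀ := f(y₀), and assume f(x₀) ≠ r₀ and r₀ ∉ R₀^{x₀}. Let L̄ be the layer function of the basic set sequence generated by the modified initial family R̄₀^{x₀} := R₀^{x₀} ∪ {r₀}, R̄₀ˣ := R₀ˣ for x ≠ x₀. Fix x ∈ D, write d₀ := d(f(x), r₀) and k₀ := Lˣ(r₀), and suppose N := Σ_{r∈𝓡} exp(−Lˣ(r)·ε)·d(f(x),r) and W := Σ_{r∈𝓡} exp(−Lˣ(r)·ε) are finite with W − exp(−k₀·ε) > 0. Define the expected distortions E := N/W and Ē := (Σ_{r∈𝓡} exp(−L̄ˣ(r)·ε)·d(f(x),r))/(Σ_{r∈𝓡} exp(−L̄ˣ(r)·ε)). If (N − exp(−k₀·ε)·d₀)/(W − exp(−k₀·ε)) ≤ d₀, then E ≤ Ē; otherwise, E ≥ Ē. -/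

import Mathlib

/-- The basic set sequence generated by an initial family `R0 : D → Set 𝓡`:
`R_0^x = R0 x` and, for `i ≥ 1`,
`R_i^x = (∪_{y : i−1 < d̄(x,y) ≤ i} R0 y) \ A_{i−1}^x` where `A_j^x = ∪_{k ≤ j} R_k^x`. -/
def basicSeq {D 𝓡 : Type*} [PseudoMetricSpace D] (R0 : D → Set 𝓡) (x : D) : ℕ → Set 𝓡
  | 0 => R0 x
  | i + 1 =>
      (⋃ y ∈ {y : D | (i : ℝ) < dist x y ∧ dist x y ≤ (i : ℝ) + 1}, R0 y) \
        ⋃ k ≤ i, basicSeq R0 x k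

def Ufam {D 𝓡 : Type*} [PseudoMetricSpace D] (R0 : D → Set 𝓡) (x : D) : ℕ → Set 𝓡
  | 0 => R0 x
  | i + 1 => ⋃ y ∈ {y : D | (i : ℝ) < dist x y ∧ dist x y ≤ (i : ℝ) + 1}, R0 y

lemma biUnion_basic_eq {D 𝓡 : Type*} [PseudoMetricSpace D] (R0 : D → Set 𝓡) (x : D) :
    ∀ j, (⋃ k ≤ j, basicSeq R0 x k) = ⋃ k ≤ j, Ufam R0 x k := by
  intro j
  induction j with
  | zero => simp [basicSeq, Ufam]
  | succ n ih =>
      rw [Set.biUnion_le_succ, Set.biUnion_le_succ, ih, basicSeq, ih, Set.union_diff_self]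
      rfl

lemma mem_basic_iff {D 𝓡 : Type*} [PseudoMetricSpace D] (R0 : D → Set 𝓡) (x : D) (i : ℕ) (r : 𝓡) :
    r ∈ basicSeq R0 x i ↔ r ∈ Ufam R0 x i ∧ ∀ k < i, r ∉ Ufam R0 x k := by
  cases i with
  | zero => simp [basicSeq, Ufam]
  | succ n =>
      rw [basicSeq, Set.mem_diff, biUnion_basic_eq]
      constructor
      · rintro ⟨h1, h2⟩
        exact ⟨h1, fun k hk hmem => h2 (Set.mem_biUnion (Nat.lt_succ_iff.mp hk) hmem)⟩
      · rintro ⟨h1, h2⟩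
        refine ⟨h1, fun hmem => ?_⟩
        obtain ⟨k, hk, hm⟩ := Set.mem_iUnion₂.mp hmem
        exact h2 k (Nat.lt_succ_of_le hk) hm

lemma Ufam_mono {D 𝓡 : Type*} [PseudoMetricSpace D] {R0 R1 : D → Set 𝓡}
    (h : ∀ y, R0 y ⊆ R1 y) (x : D) (i : ℕ) : Ufam R0 x i ⊆ Ufam R1 x i := by
  cases i with
  | zero => exact h x
  | succ n => exact Set.iUnion₂_mono fun y _ => h y


/-- Utility change when one point `r₀ = f y₀` is migrated into the initial layer
of one dataset `x₀`: writing `N = Σ_r exp(-Lˣ(r)ε)·d(f x, r)`,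
`W = Σ_r exp(-Lˣ(r)ε)`, `d₀ = d(f x, r₀)` and `k₀ = Lˣ(r₀)`, if
`(N − exp(−k₀ε)·d₀)/(W − exp(−k₀ε)) ≤ d₀` then the expected distortion does not
decrease (`E ≤ Ē`), and otherwise it does not increase (`E ≥ Ē`). -/
theorem stmt_16 {D 𝓡 : Type*} [MetricSpace D] [MetricSpace 𝓡] [Countable 𝓡]
    (f : D → 𝓡) (ε : ℝ) (hε : 0 < ε)
    (R0 : D → Set 𝓡) (hcover : (⋃ x : D, R0 x) = Set.univ)
    (L : D → 𝓡 → ℕ)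
    (hL : ∀ (x : D) (r : 𝓡), r ∈ basicSeq R0 x (L x r))
    (x₀ y₀ : D) (hne : f x₀ ≠ f y₀) (hr₀ : f y₀ ∉ R0 x₀)
    (R0' : D → Set 𝓡)
    (hR0'x₀ : R0' x₀ = R0 x₀ ∪ {f y₀})
    (hR0' : ∀ x : D, x ≠ x₀ → R0' x = R0 x)
    (L' : D → 𝓡 → ℕ)
    (hL' : ∀ (x : D) (r : 𝓡), r ∈ basicSeq R0' x (L' x r))
    (x : D) (N W : ℝ)
    (hN : HasSum (fun r : 𝓡 => Real.exp (-(L x r : ℝ) * ε) * dist (f x) r) N)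
    (hW : HasSum (fun r : 𝓡 => Real.exp (-(L x r : ℝ) * ε)) W)
    (hWpos : 0 < W - Real.exp (-(L x (f y₀) : ℝ) * ε)) :
    ((N - Real.exp (-(L x (f y₀) : ℝ) * ε) * dist (f x) (f y₀)) /
        (W - Real.exp (-(L x (f y₀) : ℝ) * ε)) ≤ dist (f x) (f y₀) →
      N / W ≤ (∑' r : 𝓡, Real.exp (-(L' x r : ℝ) * ε) * dist (f x) r) /
        (∑' r : 𝓡, Real.exp (-(L' x r : ℝ) * ε))) ∧
    (dist (f x) (f y₀) <
        (N - Real.exp (-(L x (f y₀) : ℝ) * ε) * dist (f x) (f y₀)) /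
          (W - Real.exp (-(L x (f y₀) : ℝ) * ε)) →
      (∑' r : 𝓡, Real.exp (-(L' x r : ℝ) * ε) * dist (f x) r) /
        (∑' r : 𝓡, Real.exp (-(L' x r : ℝ) * ε)) ≤ N / W) := by
  classical
  set r₀ := f y₀ with hr₀def
  -- R0 ⊆ R0' pointwise, and R0' ⊆ R0 ∪ {r₀}
  have hsub : ∀ y, R0 y ⊆ R0' y := by
    intro y
    by_cases hy : y = x₀
    · subst hy; rw [hR0'x₀]; exact Set.subset_union_left
    · rw [hR0' y hy]
  have hsub' : ∀ y, R0' y ⊆ R0 y ∪ {r₀} := by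
    intro y
    by_cases hy : y = x₀
    · subst hy; rw [hR0'x₀]
    · rw [hR0' y hy]; exact Set.subset_union_left
  have hU : ∀ i, Ufam R0 x i ⊆ Ufam R0' x i := Ufam_mono hsub x
  have hU' : ∀ i, Ufam R0' x i ⊆ Ufam R0 x i ∪ {r₀} := by
    intro i
    cases i with
    | zero => exact hsub' x
    | succ n =>
        intro r hr
        obtain ⟨y, hy, hm⟩ := Set.mem_iUnion₂.mp hr
        rcases hsub' y hm with h | h
        · exact Or.inl (Set.mem_biUnion hy h)
        · exact Or.inr h
  -- layer facts
  have hLfact : ∀ r, r ∈ Ufam R0 x (L x r) ∧ ∀ k < L x r, r ∉ Ufam R0 x k :=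
    fun r => (mem_basic_iff R0 x (L x r) r).mp (hL x r)
  have hL'fact : ∀ r, r ∈ Ufam R0' x (L' x r) ∧ ∀ k < L' x r, r ∉ Ufam R0' x k :=
    fun r => (mem_basic_iff R0' x (L' x r) r).mp (hL' x r)
  have hLle : L' x r₀ ≤ L x r₀ := by
    by_contra h
    exact (hL'fact r₀).2 (L x r₀) (lt_of_not_ge h) (hU _ (hLfact r₀).1)
  have hLeq : ∀ r, r ≠ r₀ → L' x r = L x r := by
    intro r hr
    have h1 : r ∈ Ufam R0 x (L' x r) := by
      rcases hU' _ (hL'fact r).1 with h | h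
      · exact h
      · exact absurd h hr
    refine le_antisymm ?_ ?_
    · by_contra h
      exact (hL'fact r).2 (L x r) (lt_of_not_ge h) (hU _ (hLfact r).1)
    · by_contra h
      exact (hLfact r).2 (L' x r) (lt_of_not_ge h) h1
  -- abbreviations
  set a := Real.exp (-(L x r₀ : ℝ) * ε) with ha
  set b := Real.exp (-(L' x r₀ : ℝ) * ε) with hb
  set d₀ := dist (f x) r₀ with hd₀
  have hba : a ≤ b := by
    apply Real.exp_le_exp.mpr
    have : (L' x r₀ : ℝ) ≤ (L x r₀ : ℝ) := Nat.cast_le.mpr hLle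
    nlinarith
  have hapos : 0 < a := Real.exp_pos _
  have hbpos : 0 < b := Real.exp_pos _
  -- the new summands are updates of the old at r₀
  have hfun1 : (fun r : 𝓡 => Real.exp (-(L' x r : ℝ) * ε) * dist (f x) r) =
      Function.update (fun r : 𝓡 => Real.exp (-(L x r : ℝ) * ε) * dist (f x) r) r₀ (b * d₀) := by
    funext r
    by_cases hr : r = r₀
    · subst hr; rw [Function.update_self]
    · rw [Function.update_of_ne hr, hLeq r hr]
  have hfun2 : (fun r : 𝓡 => Real.exp (-(L' x r : ℝ) * ε)) =
      Function.update (fun r : 𝓡 => Real.exp (-(L x r : ℝ) * ε)) r₀ b := by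
    funext r
    by_cases hr : r = r₀
    · subst hr; rw [Function.update_self]
    · rw [Function.update_of_ne hr, hLeq r hr]
  have hN' : HasSum (fun r : 𝓡 => Real.exp (-(L' x r : ℝ) * ε) * dist (f x) r)
      (N - a * d₀ + b * d₀) := by
    rw [hfun1]
    have h := hN.update r₀ (b * d₀)
    have e : N - a * d₀ + b * d₀ = b * d₀ - a * d₀ + N := by ring
    rw [e]; exact h
  have hW' : HasSum (fun r : 𝓡 => Real.exp (-(L' x r : ℝ) * ε)) (W - a + b) := by
    rw [hfun2]
    have h := hW.update r₀ b
    have e : W - a + b = b - a + W := by ring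
    rw [e]; exact h
  rw [hN'.tsum_eq, hW'.tsum_eq]
  have hWgt : 0 < W := by nlinarith
  have hW'pos : 0 < W - a + b := by nlinarith
  have hd₀nn : 0 ≤ d₀ := dist_nonneg
  constructor
  · intro h
    have hM : N - a * d₀ ≤ d₀ * (W - a) := by
      have := (div_le_iff₀ hWpos).mp h
      linarith
    rw [div_le_div_iff₀ hWgt hW'pos]
    nlinarith [mul_nonneg (sub_nonneg.mpr hba) (sub_nonneg.mpr hM)]
  · intro h
    have hM : d₀ * (W - a) < N - a * d₀ := by
      have := (lt_div_iff₀ hWpos).mp h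
      linarith
    rw [div_le_div_iff₀ hW'pos hWgt]
    nlinarith [mul_nonneg (sub_nonneg.mpr hba) (le_of_lt (sub_pos.mpr hM))]
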